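/- Let 𝔤 be a 4-dimensional unimodular real Lie algebra, equipped with an inner product, whose derived algebra 𝔤' = [𝔤,𝔤] is 3-dimensional and isomorphic to the 3-dimensional Heisenberg Lie algebra. Then 𝔤 has an orthonormal basis comprised of geodesic vectors. -/

import Mathlib

/-- An inner product on a real vector space, given as a positive-definite
symmetric bilinear form. -/
structure IsInnerProduct {L : Type*} [AddCommGroup L] [Module ℝ L]
    (B : L →ₗ[ℝ] L →ₗ[ℝ] ℝ) : Prop where
  symm : ∀ x y : L, B x y = B y x
  posdef : ∀ x : L, x ≠ 0 → 0 < B x x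

/-- `Y` is a geodesic vector: `Y ≠ 0` and `⟨[X,Y],Y⟩ = 0` for all `X`. -/
def IsGeodesicVector {L : Type*} [LieRing L] [LieAlgebra ℝ L]
    (B : L →ₗ[ℝ] L →ₗ[ℝ] ℝ) (Y : L) : Prop :=
  Y ≠ 0 ∧ ∀ X : L, B ⁅X, Y⁆ Y = 0

/-- A family of vectors is orthonormal with respect to the bilinear form `B`. -/
def IsOrthonormalFamily {L : Type*} [AddCommGroup L] [Module ℝ L]
    (B : L →ₗ[ℝ] L →ₗ[ℝ] ℝ) {ι : Type*} [DecidableEq ι] (v : ι → L) : Prop :=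
  ∀ i j, B (v i) (v j) = if i = j then 1 else 0

/-- A real Lie algebra is unimodular if every adjoint map is trace-free. -/
def IsUnimodularLie (L : Type*) [LieRing L] [LieAlgebra ℝ L] : Prop :=
  ∀ X : L, LinearMap.trace ℝ L (LieAlgebra.ad ℝ L X) = 0

open scoped RealInnerProductSpace
open Module Submodule

set_option linter.unusedSectionVars false
set_option maxHeartbeats 1000000

section Engine
variable {E : Type*} [NormedAddCommGroup E] [InnerProductSpace ℝ E] [FiniteDimensional ℝ E]

lemma aux_repr_eq_inner {ι : Type*} [Fintype ι] [DecidableEq ι] (b : Basis ι ℝ E)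
    (hb : Orthonormal ℝ b) (v : E) (i : ι) : b.repr v i = ⟪b i, v⟫ := by
  conv_rhs => rw [← b.sum_repr v]
  rw [inner_sum]
  simp [real_inner_smul_right, orthonormal_iff_ite.mp hb, Finset.sum_ite_eq',
    mul_comm]

lemma aux_trace_eq_sum_inner {ι : Type*} [Fintype ι] [DecidableEq ι] (b : Basis ι ℝ E)
    (hb : Orthonormal ℝ b) (φ : E →ₗ[ℝ] E) :
    LinearMap.trace ℝ E φ = ∑ i, ⟪b i, φ (b i)⟫ := by
  rw [LinearMap.trace_eq_matrix_trace ℝ b, Matrix.trace]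
  refine Finset.sum_congr rfl fun i _ => ?_
  rw [Matrix.diag, LinearMap.toMatrix_apply, aux_repr_eq_inner b hb]

lemma aux_engine (hdim : finrank ℝ E = 4) (β : E →ₗ[ℝ] E →ₗ[ℝ] E)
    (halt : ∀ u, β u u = 0) (z : E) (hz : z ≠ 0)
    (hcent : ∀ u, β u z = 0)
    (htr : ∀ u, LinearMap.trace ℝ E (β u) = 0) :
    ∃ b : Basis (Fin 4) ℝ E, (∀ i j, ⟪b i, b j⟫ = if i = j then 1 else 0) ∧
      ∀ i, b i ≠ 0 ∧ ∀ X : E, ⟪β X (b i), b i⟫ = 0 := by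
  classical
  have hanti : ∀ u v, β u v = - β v u := by
    intro u v
    have h := halt (u + v)
    simp only [map_add, LinearMap.add_apply, halt u, halt v, zero_add, add_zero] at h
    exact eq_neg_of_add_eq_zero_left (by rw [add_comm]; exact h)
  have hswap : ∀ u v w : E, ⟪β u v, w⟫ = -⟪β v u, w⟫ := by
    intro u v w; rw [hanti u v, inner_neg_left]
  -- the orthogonal complement of z
  set K : Submodule ℝ E := ℝ ∙ z with hKdef
  have hK1 : finrank ℝ K = 1 := finrank_span_singleton hz
  have hV3 : finrank ℝ (Kᗮ) = 3 := by
    have := Submodule.finrank_add_finrank_orthogonal K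
    rw [hK1, hdim] at this; omega
  set V : Submodule ℝ E := Kᗮ with hVdef
  -- an orthonormal basis of V
  let g : OrthonormalBasis (Fin 3) ℝ V := (stdOrthonormalBasis ℝ V).reindex (finCongr hV3)
  set G : Fin 3 → E := fun i => (g i : E) with hGdef
  have hGdef' : ∀ i, ((g i : E)) = G i := fun _ => rfl
  have hzG : ∀ i, ⟪z, G i⟫ = 0 := by
    intro i
    exact (g i).2 z (Submodule.mem_span_singleton_self z)
  have hGG : ∀ i j, ⟪G i, G j⟫ = if i = j then 1 else 0 := by
    intro i j
    have := orthonormal_iff_ite.mp g.orthonormal i j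
    rwa [Submodule.coe_inner] at this
  -- the unit central vector
  set e0 : E := ‖z‖⁻¹ • z with he0def
  have hnz : ‖z‖ ≠ 0 := norm_ne_zero_iff.mpr hz
  have he0 : ⟪e0, e0⟫ = 1 := by
    rw [he0def, real_inner_smul_left, real_inner_smul_right,
      real_inner_self_eq_norm_mul_norm]
    field_simp
  have he0G : ∀ i, ⟪e0, G i⟫ = 0 := by
    intro i; rw [he0def, real_inner_smul_left, hzG, mul_zero]
  -- the orthonormal family used for trace computations
  set ee : Fin 4 → E := Fin.cons e0 G with heedef
  have hON : ∀ i j, ⟪ee i, ee j⟫ = if i = j then 1 else 0 := by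
    intro i j
    induction i using Fin.cases with
    | zero =>
      induction j using Fin.cases with
      | zero => simpa [heedef] using he0
      | succ j => simp [heedef, he0G j, (Fin.succ_ne_zero j).symm]
    | succ i =>
      induction j using Fin.cases with
      | zero => simp [heedef, real_inner_comm, he0G i, Fin.succ_ne_zero i]
      | succ j => simp [heedef, hGG i j, Fin.succ_inj]
  have horth : Orthonormal ℝ ee := orthonormal_iff_ite.mpr hON
  have hcard : Fintype.card (Fin 4) = finrank ℝ E := by simp [hdim]
  let bg : Basis (Fin 4) ℝ E := basisOfLinearIndependentOfCardEqFinrank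
    horth.linearIndependent hcard
  have hbg : ⇑bg = ee := coe_basisOfLinearIndependentOfCardEqFinrank _ _
  -- unimodularity on the G's
  have hU3 : ∀ u, ⟪G 0, β u (G 0)⟫ + ⟪G 1, β u (G 1)⟫ + ⟪G 2, β u (G 2)⟫ = 0 := by
    intro u
    have h := htr u
    rw [aux_trace_eq_sum_inner bg (hbg ▸ horth) (β u)] at h
    rw [Fin.sum_univ_four] at h
    have h0 : bg 0 = e0 := by rw [hbg]; rfl
    have h1 : bg 1 = G 0 := by rw [hbg]; rfl
    have h2 : bg 2 = G 1 := by rw [hbg]; rfl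
    have h3 : bg 3 = G 2 := by rw [hbg]; rfl
    rw [h0, h1, h2, h3] at h
    have hA : ⟪e0, β u e0⟫ = 0 := by
      rw [he0def, map_smul, hcent, smul_zero, inner_zero_right]
    rw [hA] at h; linarith
  -- the cyclic bracket values
  set cv : Fin 3 → E := ![β (G 1) (G 2), β (G 2) (G 0), β (G 0) (G 1)] with hcvdef
  -- symmetry facts
  have s0' : ⟪β (G 0) (G 1), G 1⟫ + ⟪β (G 0) (G 2), G 2⟫ = 0 := by
    have h := hU3 (G 0)
    rw [halt (G 0), inner_zero_right] at h
    have f1 : ⟪G 1, β (G 0) (G 1)⟫ = ⟪β (G 0) (G 1), G 1⟫ := real_inner_comm _ _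
    have f2 : ⟪G 2, β (G 0) (G 2)⟫ = ⟪β (G 0) (G 2), G 2⟫ := real_inner_comm _ _
    linarith
  have s1' : ⟪β (G 1) (G 0), G 0⟫ + ⟪β (G 1) (G 2), G 2⟫ = 0 := by
    have h := hU3 (G 1)
    rw [halt (G 1), inner_zero_right] at h
    have f1 : ⟪G 0, β (G 1) (G 0)⟫ = ⟪β (G 1) (G 0), G 0⟫ := real_inner_comm _ _
    have f2 : ⟪G 2, β (G 1) (G 2)⟫ = ⟪β (G 1) (G 2), G 2⟫ := real_inner_comm _ _
    linarith
  have s2' : ⟪β (G 2) (G 0), G 0⟫ + ⟪β (G 2) (G 1), G 1⟫ = 0 := by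
    have h := hU3 (G 2)
    rw [halt (G 2), inner_zero_right] at h
    have f1 : ⟪G 0, β (G 2) (G 0)⟫ = ⟪β (G 2) (G 0), G 0⟫ := real_inner_comm _ _
    have f2 : ⟪G 1, β (G 2) (G 1)⟫ = ⟪β (G 2) (G 1), G 1⟫ := real_inner_comm _ _
    linarith
  have e01 : ⟪cv 0, G 1⟫ = ⟪cv 1, G 0⟫ := by
    show ⟪β (G 1) (G 2), G 1⟫ = ⟪β (G 2) (G 0), G 0⟫
    rw [hswap (G 1) (G 2)]; linarith
  have e02 : ⟪cv 0, G 2⟫ = ⟪cv 2, G 0⟫ := by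
    show ⟪β (G 1) (G 2), G 2⟫ = ⟪β (G 0) (G 1), G 0⟫
    rw [hswap (G 0) (G 1)]; linarith
  have e12 : ⟪cv 1, G 2⟫ = ⟪cv 2, G 1⟫ := by
    show ⟪β (G 2) (G 0), G 2⟫ = ⟪β (G 0) (G 1), G 1⟫
    rw [hswap (G 2) (G 0)]; linarith
  -- the symmetric operator on V
  let T : V →ₗ[ℝ] V := g.toBasis.constr ℝ (fun l => (∑ m, ⟪cv l, G m⟫ • g m : V))
  have hTapp : ∀ l, T (g l) = ∑ m, ⟪cv l, G m⟫ • g m := by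
    intro l
    have h := g.toBasis.constr_basis ℝ (fun l => (∑ m, ⟪cv l, G m⟫ • g m : V)) l
    simp only [OrthonormalBasis.coe_toBasis] at h
    exact h
  have hgg' : ∀ i j : Fin 3, (⟪g i, g j⟫ : ℝ) = if i = j then 1 else 0 :=
    fun i j => orthonormal_iff_ite.mp g.orthonormal i j
  have hTin : ∀ l m, (⟪T (g l), g m⟫ : ℝ) = ⟪cv l, G m⟫ := by
    intro l m
    rw [hTapp, sum_inner]
    simp only [Submodule.coe_inner, Submodule.coe_smul, hGdef', real_inner_smul_left, hGG]
    simp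
  have hexpand : ∀ u v : V, (⟪T u, v⟫ : ℝ)
      = ∑ i, ∑ j, g.repr u i * g.repr v j * ⟪T (g i), g j⟫ := by
    intro u v
    conv_lhs => rw [← g.sum_repr u, ← g.sum_repr v]
    rw [map_sum, sum_inner]
    refine Finset.sum_congr rfl fun i _ => ?_
    rw [map_smul, real_inner_smul_left, inner_sum, Finset.mul_sum]
    refine Finset.sum_congr rfl fun j _ => ?_
    rw [real_inner_smul_right]; ring
  have hsymT : T.IsSymmetric := by
    intro u v
    conv_rhs => rw [real_inner_comm]
    rw [hexpand u v, hexpand v u]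
    simp only [Fin.sum_univ_three]
    rw [hTin 0 0, hTin 0 1, hTin 0 2, hTin 1 0, hTin 1 1, hTin 1 2,
      hTin 2 0, hTin 2 1, hTin 2 2]
    linear_combination (g.repr u 0 * g.repr v 1 - g.repr u 1 * g.repr v 0) * e01
      + (g.repr u 0 * g.repr v 2 - g.repr u 2 * g.repr v 0) * e02
      + (g.repr u 1 * g.repr v 2 - g.repr u 2 * g.repr v 1) * e12
  -- spectral theorem
  let f : OrthonormalBasis (Fin 3) ℝ V := hsymT.eigenvectorBasis hV3
  let μ : Fin 3 → ℝ := hsymT.eigenvalues hV3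
  have hf : ∀ i, T (f i) = μ i • f i := fun i => hsymT.apply_eigenvectorBasis hV3 i
  set U : Fin 3 → Fin 3 → ℝ := fun j k => ⟪g j, f k⟫ with hUdef
  set F : Fin 3 → E := fun k => (f k : E) with hFdef
  have hFV : ∀ k, F k ∈ V := fun k => (f k).2
  have hFexp : ∀ k, F k = ∑ j, U j k • G j := by
    intro k
    have h := congrArg (fun v : V => (v : E)) (g.sum_repr' (f k))
    simpa [hFdef, hUdef, hGdef] using h.symm
  have hTF : ∀ l c, (⟪T (g l), f c⟫ : ℝ) = μ c * U l c := by
    intro l c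
    rw [hsymT (g l) (f c), hf c, real_inner_smul_right]
  have key : ∀ l c, ⟪cv l, F c⟫ = μ c * U l c := by
    intro l c
    have h1 : ⟪cv l, F c⟫ = ∑ m, U m c * ⟪cv l, G m⟫ := by
      rw [hFexp c, inner_sum]
      refine Finset.sum_congr rfl fun m _ => ?_
      rw [real_inner_smul_right]
    have h2 : (⟪T (g l), f c⟫ : ℝ) = ∑ m, ⟪cv l, G m⟫ * U m c := by
      rw [hTapp l, sum_inner]
      refine Finset.sum_congr rfl fun m _ => ?_
      rw [real_inner_smul_left]
    rw [h1, ← hTF l c, h2]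
    exact Finset.sum_congr rfl fun m _ => mul_comm _ _
  -- the key vanishing property
  have final : ∀ a b c : Fin 3, (c = a ∨ c = b) → ⟪β (F a) (F b), F c⟫ = 0 := by
    intro a b c hc
    have expand2 : β (F a) (F b) = ∑ j, ∑ k, (U j a * U k b) • β (G j) (G k) := by
      rw [hFexp a, map_sum, LinearMap.sum_apply]
      refine Finset.sum_congr rfl fun j _ => ?_
      rw [map_smul, LinearMap.smul_apply, hFexp b, map_sum, Finset.smul_sum]
      refine Finset.sum_congr rfl fun k _ => ?_
      rw [map_smul, smul_smul]
    have expand : ⟪β (F a) (F b), F c⟫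
        = ∑ j, ∑ k, U j a * U k b * ⟪β (G j) (G k), F c⟫ := by
      rw [expand2, sum_inner]
      refine Finset.sum_congr rfl fun j _ => ?_
      rw [sum_inner]
      refine Finset.sum_congr rfl fun k _ => ?_
      rw [real_inner_smul_left]
    have k12 : ⟪β (G 1) (G 2), F c⟫ = μ c * U 0 c := by
      have h := key 0 c; rwa [show cv 0 = β (G 1) (G 2) from rfl] at h
    have k20 : ⟪β (G 2) (G 0), F c⟫ = μ c * U 1 c := by
      have h := key 1 c; rwa [show cv 1 = β (G 2) (G 0) from rfl] at h
    have k01 : ⟪β (G 0) (G 1), F c⟫ = μ c * U 2 c := by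
      have h := key 2 c; rwa [show cv 2 = β (G 0) (G 1) from rfl] at h
    have k21 : ⟪β (G 2) (G 1), F c⟫ = -(μ c * U 0 c) := by
      rw [hswap, k12]
    have k02 : ⟪β (G 0) (G 2), F c⟫ = -(μ c * U 1 c) := by
      rw [hswap, k20]
    have k10 : ⟪β (G 1) (G 0), F c⟫ = -(μ c * U 2 c) := by
      rw [hswap, k01]
    rw [expand]
    simp only [Fin.sum_univ_three]
    rw [halt (G 0), halt (G 1), halt (G 2), inner_zero_left,
      k12, k20, k01, k21, k02, k10]
    rcases hc with rfl | rfl <;> ring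
  -- decomposition of an arbitrary vector
  have hdecomp : ∀ X : E, ∃ t : ℝ, ∃ v : V, X = t • z + (v : E) := by
    intro X
    have hsup : K ⊔ Kᗮ = ⊤ := Submodule.sup_orthogonal_of_hasOrthogonalProjection
    have hX : X ∈ K ⊔ Kᗮ := by rw [hsup]; trivial
    obtain ⟨u, hu, w, hw, h⟩ := Submodule.mem_sup.mp hX
    obtain ⟨t, rfl⟩ := Submodule.mem_span_singleton.mp hu
    exact ⟨t, ⟨w, hw⟩, by rw [← h]⟩
  -- geodesic property of the F's
  have hgeoF : ∀ (i : Fin 3) (X : E), ⟪β X (F i), F i⟫ = 0 := by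
    intro i X
    obtain ⟨t, v, rfl⟩ := hdecomp X
    have hz0 : β z (F i) = 0 := by rw [hanti, hcent, neg_zero]
    have hvF : (v : E) = ∑ k, (⟪f k, v⟫ : ℝ) • F k := by
      have h := congrArg (fun w : V => (w : E)) (f.sum_repr' v)
      simpa using h.symm
    have hv0 : ⟪β (v : E) (F i), F i⟫ = 0 := by
      rw [hvF, map_sum, LinearMap.sum_apply, sum_inner]
      refine Finset.sum_eq_zero fun k _ => ?_
      rw [map_smul, LinearMap.smul_apply, real_inner_smul_left,
        final k i i (Or.inr rfl), mul_zero]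
    rw [map_add, LinearMap.add_apply, map_smul, LinearMap.smul_apply,
      hz0, smul_zero, zero_add, hv0]
  -- geodesic property of e0
  have hgeo0 : ∀ X : E, ⟪β X e0, e0⟫ = 0 := by
    intro X
    rw [he0def, map_smul, hcent, smul_zero, inner_zero_left]
  -- the final orthonormal family
  set ff : Fin 4 → E := Fin.cons e0 F with hffdef
  have he0F : ∀ i, ⟪e0, F i⟫ = 0 := by
    intro i
    rw [he0def, real_inner_smul_left, hFV i z (Submodule.mem_span_singleton_self z), mul_zero]
  have hFF : ∀ i j, ⟪F i, F j⟫ = if i = j then 1 else 0 := by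
    intro i j
    have := orthonormal_iff_ite.mp f.orthonormal i j
    rwa [Submodule.coe_inner] at this
  have hONf : ∀ i j, ⟪ff i, ff j⟫ = if i = j then 1 else 0 := by
    intro i j
    induction i using Fin.cases with
    | zero =>
      induction j using Fin.cases with
      | zero => simpa [hffdef] using he0
      | succ j => simp [hffdef, he0F j, (Fin.succ_ne_zero j).symm]
    | succ i =>
      induction j using Fin.cases with
      | zero => simp [hffdef, real_inner_comm, he0F i, Fin.succ_ne_zero i]
      | succ j => simp [hffdef, hFF i j, Fin.succ_inj]
  have horthf : Orthonormal ℝ ff := orthonormal_iff_ite.mpr hONf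
  let bf : Basis (Fin 4) ℝ E := basisOfLinearIndependentOfCardEqFinrank
    horthf.linearIndependent hcard
  have hbf : ⇑bf = ff := coe_basisOfLinearIndependentOfCardEqFinrank _ _
  refine ⟨bf, ?_, ?_⟩
  · intro i j; rw [hbf]; exact hONf i j
  · intro i
    constructor
    · intro h0
      have h1 := hONf i i
      rw [← hbf, h0, inner_zero_left] at h1
      simp at h1
    · intro X
      rw [hbf]
      induction i using Fin.cases with
      | zero => simpa [hffdef] using hgeo0 X
      | succ i => simpa [hffdef] using hgeoF i X
end Engine





lemma aux_mem_span_triple {M : Type*} [AddCommGroup M] [Module ℝ M] {x y z v : M}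
    (h : v ∈ span ℝ ({x, y, z} : Set M)) : ∃ a b c : ℝ, v = a • x + b • y + c • z := by
  rw [Submodule.mem_span_insert] at h
  obtain ⟨a, w, hw, rfl⟩ := h
  rw [Submodule.mem_span_insert] at hw
  obtain ⟨b, w2, hw2, rfl⟩ := hw
  obtain ⟨c, rfl⟩ := Submodule.mem_span_singleton.mp hw2
  exact ⟨a, b, c, by rw [add_assoc]⟩

lemma aux_derived_mem {L : Type*} [LieRing L] [LieAlgebra ℝ L] (u v : L) :
    ⁅u, v⁆ ∈ (LieAlgebra.derivedSeries ℝ L 1 : Submodule ℝ L) := by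
  simp only [LieIdeal.toLieSubalgebra_toSubmodule, LieSubmodule.mem_toSubmodule]
  rw [LieAlgebra.derivedSeries_def, LieAlgebra.derivedSeriesOfIdeal_succ,
    LieAlgebra.derivedSeriesOfIdeal_zero]
  exact LieSubmodule.lie_mem_lie (LieSubmodule.mem_top u) (LieSubmodule.mem_top v)

lemma aux_central {L : Type*} [LieRing L] [LieAlgebra ℝ L] [Module.Finite ℝ L]
    (hdim : Module.finrank ℝ L = 4)
    (hU : ∀ X : L, LinearMap.trace ℝ L (LieAlgebra.ad ℝ L X) = 0)
    (x y z : L)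
    (hspan : (LieAlgebra.derivedSeries ℝ L 1 : Submodule ℝ L)
      = Submodule.span ℝ {x, y, z})
    (hind : LinearIndependent ℝ ![x, y, z])
    (hxy : ⁅x, y⁆ = z) (hxz : ⁅x, z⁆ = 0) (hyz : ⁅y, z⁆ = 0) :
    ∀ w : L, ⁅w, z⁆ = 0 := by
  classical
  have hzy : ⁅z, y⁆ = 0 := by rw [← lie_skew, hyz, neg_zero]
  have hzx : ⁅z, x⁆ = 0 := by rw [← lie_skew, hxz, neg_zero]
  have hyx : ⁅y, x⁆ = -z := by rw [← lie_skew, hxy]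
  have hmem : ∀ u v : L, ⁅u, v⁆ ∈ span ℝ ({x, y, z} : Set L) := by
    intro u v; rw [← hspan]; exact aux_derived_mem u v
  -- a vector outside the span
  have hrange : Set.range ![x, y, z] = ({x, y, z} : Set L) := by
    ext u
    constructor
    · rintro ⟨i, rfl⟩; fin_cases i <;> simp
    · rintro (rfl | rfl | rfl)
      exacts [⟨0, rfl⟩, ⟨1, rfl⟩, ⟨2, rfl⟩]
  have hspan_ne : span ℝ ({x, y, z} : Set L) ≠ ⊤ := by
    intro h
    have h1 : finrank ℝ (span ℝ ({x, y, z} : Set L)) = 3 := by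
      rw [← hrange, finrank_span_eq_card hind]; simp
    rw [h, finrank_top, hdim] at h1
    omega
  obtain ⟨w0, hw0⟩ : ∃ w0 : L, w0 ∉ span ℝ ({x, y, z} : Set L) := by
    by_contra h
    push_neg at h
    exact hspan_ne (Submodule.eq_top_iff'.mpr h)
  -- basis w0, x, y, z
  have hli : LinearIndependent ℝ (Fin.cons w0 ![x, y, z] : Fin 4 → L) := by
    rw [linearIndependent_fin_cons]
    exact ⟨hind, by rwa [hrange]⟩
  have hcard : Fintype.card (Fin 4) = finrank ℝ L := by simp [hdim]
  let bb : Basis (Fin 4) ℝ L := basisOfLinearIndependentOfCardEqFinrank hli hcard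
  have hbb : ⇑bb = Fin.cons w0 ![x, y, z] := coe_basisOfLinearIndependentOfCardEqFinrank _ _
  have hb0 : bb 0 = w0 := by rw [hbb]; rfl
  have hb1 : bb 1 = x := by rw [hbb]; rfl
  have hb2 : bb 2 = y := by rw [hbb]; rfl
  have hb3 : bb 3 = z := by rw [hbb]; rfl
  obtain ⟨a, b, p, hax⟩ := aux_mem_span_triple (hmem w0 x)
  obtain ⟨c, d, q, hay⟩ := aux_mem_span_triple (hmem w0 y)
  have haz : ⁅w0, z⁆ = (a + d) • z := by
    have h1 : ⁅w0, z⁆ = ⁅w0, ⁅x, y⁆⁆ := by rw [hxy]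
    rw [h1, leibniz_lie, hax, hay]
    simp only [add_lie, lie_add, smul_lie, lie_smul, hxy, hxz, hyz, hzy, hzx, hyx,
      lie_self, smul_zero, add_zero, zero_add, smul_neg]
    module
  -- trace computation
  have htr := hU w0
  rw [LinearMap.trace_eq_matrix_trace ℝ bb, Matrix.trace, Fin.sum_univ_four] at htr
  simp only [Matrix.diag, LinearMap.toMatrix_apply, LieAlgebra.ad_apply] at htr
  rw [hb0, hb1, hb2, hb3, lie_self, hax, hay, haz] at htr
  rw [← hb1, ← hb2, ← hb3] at htr
  simp only [map_add, map_smul, Basis.repr_self, map_zero, Finsupp.coe_add,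
    Finsupp.coe_smul, Pi.add_apply, Pi.smul_apply, Finsupp.single_apply,
    Finsupp.coe_zero, Pi.zero_apply, smul_eq_mul] at htr
  simp (config := { decide := true }) at htr
  -- htr : a + d + (a + d) = 0, hence a + d = 0
  have had : a + d = 0 := by linarith
  -- conclude for w0
  have hw0z : ⁅w0, z⁆ = 0 := by rw [haz, had, zero_smul]
  -- conclude for all w
  intro w
  have hw : w ∈ span ℝ (Set.range ⇑bb) := by rw [bb.span_eq]; trivial
  refine Submodule.span_induction ?_ ?_ ?_ ?_ hw
  · rintro r ⟨i, rfl⟩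
    fin_cases i
    · show ⁅bb 0, z⁆ = 0; rw [hb0]; exact hw0z
    · show ⁅bb 1, z⁆ = 0; rw [hb1]; exact hxz
    · show ⁅bb 2, z⁆ = 0; rw [hb2]; exact hyz
    · show ⁅bb 3, z⁆ = 0; rw [hb3]; exact lie_self z
  · exact zero_lie z
  · intro u v _ _ hu hv; rw [add_lie, hu, hv, add_zero]
  · intro t u _ hu; rw [smul_lie, hu, smul_zero]


/-- A 4-dimensional unimodular real Lie algebra with an inner product,
whose derived algebra is 3-dimensional and isomorphic to the Heisenberg Lie algebra
(i.e. has a basis `x, y, z` with `⁅x,y⁆ = z` and `z` central in it), has an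
orthonormal basis comprised of geodesic vectors. -/

theorem dim_four_heisenberg_derived_orthonormal_geodesic_basis
    {L : Type*} [LieRing L] [LieAlgebra ℝ L] [Module.Finite ℝ L]
    (hdim : Module.finrank ℝ L = 4) (hU : IsUnimodularLie L)
    (hdim' : Module.finrank ℝ (LieAlgebra.derivedSeries ℝ L 1) = 3)
    (x y z : L)
    (hspan : (LieAlgebra.derivedSeries ℝ L 1 : Submodule ℝ L)
      = Submodule.span ℝ {x, y, z})
    (hind : LinearIndependent ℝ ![x, y, z])
    (hxy : ⁅x, y⁆ = z) (hxz : ⁅x, z⁆ = 0) (hyz : ⁅y, z⁆ = 0)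
    (B : L →ₗ[ℝ] L →ₗ[ℝ] ℝ) (hB : IsInnerProduct B) :
    ∃ b : Basis (Fin 4) ℝ L,
      IsOrthonormalFamily B b ∧ ∀ i, IsGeodesicVector B (b i) := by
  classical
  have hcentral : ∀ w : L, ⁅w, z⁆ = 0 :=
    aux_central hdim hU x y z hspan hind hxy hxz hyz
  have hzne : z ≠ 0 := by
    have h := hind.ne_zero 2
    simpa using h
  letI cc : InnerProductSpace.Core ℝ L :=
    { inner := fun u v => B u v
      conj_inner_symm := fun u v => by simpa using hB.symm v u
      re_inner_nonneg := fun u => by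
        rcases eq_or_ne u 0 with rfl | hu
        · simp
        · simpa using (hB.posdef u hu).le
      add_left := fun u v w => by simp
      smul_left := fun u v r => by simp
      definite := fun u hu => by
        by_contra h
        exact absurd hu (ne_of_gt (hB.posdef u h)) }
  letI : NormedAddCommGroup L := cc.toNormedAddCommGroup
  letI : InnerProductSpace ℝ L := InnerProductSpace.ofCore cc.toCore
  haveI : FiniteDimensional ℝ L := ‹Module.Finite ℝ L›
  letI : LieRing (Module.End ℝ L) := LieRing.ofAssociativeRing
  let β : L →ₗ[ℝ] L →ₗ[ℝ] L := (LieAlgebra.ad ℝ L).toLinearMap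
  have halt : ∀ u : L, β u u = 0 := fun u => lie_self u
  have hcent : ∀ u : L, β u z = 0 := fun u => hcentral u
  have htr : ∀ u : L, LinearMap.trace ℝ L (β u) = 0 := fun u => hU u
  obtain ⟨b, hON, hGeo⟩ := aux_engine hdim β halt z hzne hcent htr
  refine ⟨b, ?_, ?_⟩
  · intro i j
    exact hON i j
  · intro i
    exact ⟨(hGeo i).1, fun X => (hGeo i).2 X⟩
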